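/- Let S be a maximal triangular subalgebra of B(H), let δ : S → B(H) be a bounded derivation, let p ∈ lat(S) with p ≠ 0 and p ≠ 1, and fix unit vectors ξ₀ with p ξ₀ = 0 and η₁ with p η₁ = η₁; set q₁ = ξ₀ ⊗ η₁ (which lies in S since p B(H) p⊥ ⊆ S). Then there exists a bounded linear operator c₂ ∈ B(H) with ‖c₂‖ ≤ 2‖δ‖ such that c₂ p = 0, p c₂ (1 − p) = 0, and for every unit vector ξ with p ξ = 0, writing q = ξ ⊗ η₁ and p_ξ = ξ ⊗ ξ, one has p_ξ c₂ (1 − p) = q* δ(q₁) q₁* q − q* δ(q) (1 − p). -/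

import Mathlib

set_option maxHeartbeats 1000000
set_option synthInstance.maxHeartbeats 400000

open ContinuousLinearMap in
/-- The diagonal `S ∩ S*` of a subalgebra of `B(H)`. -/
def diagonal {H : Type*} [NormedAddCommGroup H] [InnerProductSpace ℂ H] [CompleteSpace H]
    (S : Subalgebra ℂ (H →L[ℂ] H)) : Set (H →L[ℂ] H) :=
  {a | a ∈ S ∧ adjoint a ∈ S}

/-- A set of operators is maximal abelian in `B(H)` if it is commutative and contains
every operator commuting with all of its members. -/
def IsMaxAbelian {H : Type*} [NormedAddCommGroup H] [InnerProductSpace ℂ H]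
    (D : Set (H →L[ℂ] H)) : Prop :=
  (∀ a ∈ D, ∀ b ∈ D, a * b = b * a) ∧
  (∀ b : H →L[ℂ] H, (∀ a ∈ D, a * b = b * a) → b ∈ D)

/-- A (unital) subalgebra of `B(H)` is triangular if its diagonal `S ∩ S*` is
maximal abelian in `B(H)`. -/
def IsTriangular {H : Type*} [NormedAddCommGroup H] [InnerProductSpace ℂ H] [CompleteSpace H]
    (S : Subalgebra ℂ (H →L[ℂ] H)) : Prop :=
  IsMaxAbelian (diagonal S)

/-- `S` is maximal triangular if it is triangular and not properly contained in any
other triangular subalgebra. -/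
def IsMaxTriangular {H : Type*} [NormedAddCommGroup H] [InnerProductSpace ℂ H] [CompleteSpace H]
    (S : Subalgebra ℂ (H →L[ℂ] H)) : Prop :=
  IsTriangular S ∧ ∀ T : Subalgebra ℂ (H →L[ℂ] H), IsTriangular T → S ≤ T → S = T

open ContinuousLinearMap in
/-- `p ∈ lat S`: `p` is an orthogonal projection with `a p = p a p` for all `a ∈ S`. -/
def InLat {H : Type*} [NormedAddCommGroup H] [InnerProductSpace ℂ H] [CompleteSpace H]
    (S : Subalgebra ℂ (H →L[ℂ] H)) (p : H →L[ℂ] H) : Prop :=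
  p * p = p ∧ adjoint p = p ∧ ∀ a ∈ S, a * p = p * a * p

/-- A bounded derivation from `S` into `B(H)`: a continuous linear map obeying the
Leibniz product rule on `S`. -/
def IsDerivation {H : Type*} [NormedAddCommGroup H] [InnerProductSpace ℂ H] [CompleteSpace H]
    (S : Subalgebra ℂ (H →L[ℂ] H)) (δ : S →L[ℂ] (H →L[ℂ] H)) : Prop :=
  ∀ a b : S, δ (a * b) = δ a * (b : H →L[ℂ] H) + (a : H →L[ℂ] H) * δ b

/-- The rank-one operator `ξ ⊗ η : ζ ↦ ⟨ζ, ξ⟩ η` (inner product linear in the first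
argument, i.e. `⟪ξ, ζ⟫ • η` in Mathlib's convention). Its adjoint is `η ⊗ ξ`. -/
noncomputable def rankOne {H : Type*} [NormedAddCommGroup H] [InnerProductSpace ℂ H]
    (ξ η : H) : H →L[ℂ] H :=
  (ContinuousLinearMap.toSpanSingleton ℂ η).comp (innerSL ℂ ξ)

section AuxRankOne
open ContinuousLinearMap
variable {H : Type*} [NormedAddCommGroup H] [InnerProductSpace ℂ H]

lemma rankOne_apply (ξ η ζ : H) : rankOne ξ η ζ = (inner ℂ ξ ζ : ℂ) • η := rfl

lemma rankOne_add_left (ξ ξ' η : H) :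
    rankOne (ξ + ξ') η = rankOne ξ η + rankOne ξ' η := by
  ext ζ; simp [rankOne_apply, inner_add_left, add_smul]

lemma rankOne_smul_left (c : ℂ) (ξ η : H) :
    rankOne (c • ξ) η = (starRingEnd ℂ c) • rankOne ξ η := by
  ext ζ; simp [rankOne_apply, inner_smul_left, smul_smul, mul_comm]

lemma rankOne_norm_le (ξ η : H) : ‖rankOne ξ η‖ ≤ ‖ξ‖ * ‖η‖ := by
  refine opNorm_le_bound _ (by positivity) fun ζ => ?_
  rw [rankOne_apply, norm_smul]
  calc ‖(inner ℂ ξ ζ : ℂ)‖ * ‖η‖ ≤ (‖ξ‖ * ‖ζ‖) * ‖η‖ :=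
        mul_le_mul_of_nonneg_right (norm_inner_le_norm ξ ζ) (norm_nonneg η)
    _ = ‖ξ‖ * ‖η‖ * ‖ζ‖ := by ring

variable [CompleteSpace H]

lemma adjoint_rankOne (ξ η : H) : adjoint (rankOne ξ η) = rankOne η ξ := by
  symm
  rw [eq_adjoint_iff]
  intro x y
  simp [rankOne_apply, inner_smul_left, inner_smul_right, mul_comm]

lemma proj_apply_norm_le {e : H →L[ℂ] H} (he2 : e * e = e) (hea : adjoint e = e)
    (ζ : H) : ‖e ζ‖ ≤ ‖ζ‖ := by
  have h1 := (adjoint_inner_right e ζ (e ζ)).symm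
  rw [hea, ← ContinuousLinearMap.mul_apply, he2] at h1
  have h2 : ‖e ζ‖ ^ 2 = RCLike.re (inner ℂ ζ (e ζ) : ℂ) := by
    rw [← h1, inner_self_eq_norm_sq (𝕜 := ℂ)]
  have h3 : RCLike.re (inner ℂ ζ (e ζ) : ℂ) ≤ ‖ζ‖ * ‖e ζ‖ := by
    calc RCLike.re (inner ℂ ζ (e ζ) : ℂ) ≤ ‖(inner ℂ ζ (e ζ) : ℂ)‖ := RCLike.re_le_norm _
      _ ≤ ‖ζ‖ * ‖e ζ‖ := norm_inner_le_norm _ _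
  nlinarith [norm_nonneg (e ζ), norm_nonneg ζ]

lemma proj_norm_le {e : H →L[ℂ] H} (he2 : e * e = e) (hea : adjoint e = e) :
    ‖e‖ ≤ 1 := opNorm_le_bound _ zero_le_one fun ζ => by
  simpa using proj_apply_norm_le he2 hea ζ

end AuxRankOne

section Corner
open ContinuousLinearMap
variable {H : Type*} [NormedAddCommGroup H] [InnerProductSpace ℂ H] [CompleteSpace H]
  {S : Subalgebra ℂ (H →L[ℂ] H)} {p : H →L[ℂ] H}

lemma p_mem_diagonal (hS : IsMaxTriangular S) (hp : InLat S p) : p ∈ diagonal S := by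
  apply hS.1.2
  intro a ha
  have h1 : a * p = p * a * p := hp.2.2 a ha.1
  have h2 : adjoint a * p = p * adjoint a * p := hp.2.2 _ ha.2
  have h3 := congrArg star h2
  simp only [star_mul, star_eq_adjoint, adjoint_adjoint, hp.2.1] at h3
  rw [h1]
  rw [← mul_assoc] at h3
  rw [← h3]

lemma corner_mem (hS : IsMaxTriangular S) (hp : InLat S p) :
    ∀ x : H →L[ℂ] H, p * x * (1 - p) ∈ S := by
  have hpp : p * p = p := hp.1
  have hps : star p = p := by rw [star_eq_adjoint]; exact hp.2.1
  have hpS : p ∈ S := (p_mem_diagonal hS hp).1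
  have hep : (1 - p) * p = 0 := by rw [sub_mul, one_mul, hpp, sub_self]
  have hpe : p * (1 - p) = 0 := by rw [mul_sub, mul_one, hpp, sub_self]
  have hee : (1 - p) * (1 - p) = 1 - p := by rw [mul_sub, mul_one, hep, sub_zero]
  have hlow : ∀ b ∈ S, (1 - p) * b * p = 0 := by
    intro b hb
    rw [sub_mul, one_mul, sub_mul, hp.2.2 b hb, sub_self]
  have hright : ∀ b ∈ S, (1 - p) * b * (1 - p) = (1 - p) * b := by
    intro b hb
    rw [mul_sub, mul_one, hlow b hb, sub_zero]
  have hupadj : ∀ b ∈ S, p * star b * (1 - p) = 0 := by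
    intro b hb
    have h := congrArg star (hp.2.2 b hb)
    simp only [star_mul, hps] at h
    have h' : p * star b = p * star b * p := h.trans (mul_assoc p (star b) p).symm
    rw [mul_sub, mul_one, ← h', sub_self]
  set T : Subalgebra ℂ (H →L[ℂ] H) :=
    { carrier := {t | ∃ a ∈ S, ∃ x : H →L[ℂ] H, t = a + p * x * (1 - p)}
      one_mem' := ⟨1, S.one_mem, 0, by simp⟩
      zero_mem' := ⟨0, S.zero_mem, 0, by simp⟩
      add_mem' := by
        rintro s t ⟨a, ha, x, rfl⟩ ⟨b, hb, y, rfl⟩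
        exact ⟨a + b, S.add_mem ha hb, x + y, by noncomm_ring⟩
      mul_mem' := by
        rintro s t ⟨a, ha, x, rfl⟩ ⟨b, hb, y, rfl⟩
        refine ⟨a * b, S.mul_mem ha hb, a * p * y + x * ((1 - p) * b), ?_⟩
        calc (a + p*x*(1-p)) * (b + p*y*(1-p))
            = a*b + (a*p)*y*(1-p) + p*x*((1-p)*b) + p*x*(((1-p)*p)*(y*(1-p))) := by
              noncomm_ring
          _ = a*b + (p*a*p)*y*(1-p) + p*x*((1-p)*b*(1-p)) + p*x*((0:H →L[ℂ] H)*(y*(1-p))) := by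
              conv_lhs => rw [hp.2.2 a ha, ← hright b hb, hep]
          _ = a*b + p*(a*p*y + x*((1-p)*b))*(1-p) := by noncomm_ring
      algebraMap_mem' := fun c => ⟨algebraMap ℂ _ c, S.algebraMap_mem c, 0, by simp⟩ }
  have hmemT : ∀ t : H →L[ℂ] H, t ∈ T ↔ ∃ a ∈ S, ∃ x : H →L[ℂ] H, t = a + p * x * (1 - p) :=
    fun t => Iff.rfl
  have hST : S ≤ T := fun a ha => ⟨a, ha, 0, by simp⟩
  have hclaim : ∀ t : H →L[ℂ] H, (∃ a ∈ S, ∃ x : H →L[ℂ] H, t = a + p * x * (1 - p)) →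
      (∃ b ∈ S, ∃ y : H →L[ℂ] H, adjoint t = b + p * y * (1 - p)) → adjoint t ∈ S := by
    rintro t ⟨a, ha, x, rfl⟩ ⟨b, hb, y, hby⟩
    have hA : p * star (a + p*x*(1-p)) * (1-p) = 0 := by
      have e1 : p * star (a + p*x*(1-p)) * (1-p)
          = p * star a * (1-p) + (p*(1-p)) * star x * (p * (1-p)) := by
        simp only [star_add, star_mul, star_sub, star_one, hps]
        noncomm_ring
      rw [e1, hupadj a ha, hpe, zero_add, zero_mul, zero_mul]
    rw [star_eq_adjoint, hby] at hA
    have e2 : p * (b + p*y*(1-p)) * (1-p) = p*b*(1-p) + (p*p)*y*((1-p)*(1-p)) := by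
      noncomm_ring
    rw [e2, hpp, hee] at hA
    have hy : p * y * (1-p) = -(p * b * (1-p)) := eq_neg_of_add_eq_zero_right hA
    rw [hby, hy]
    have hcor : p * b * (1-p) ∈ S := by
      have h1 : p * b ∈ S := S.mul_mem hpS hb
      have e3 : p*b*(1-p) = p*b - (p*b)*p := by noncomm_ring
      rw [e3]; exact S.sub_mem h1 (S.mul_mem h1 hpS)
    exact S.add_mem hb (S.neg_mem hcor)
  have hdiag : diagonal T = diagonal S := by
    ext t
    constructor
    · rintro ⟨htT, htaT⟩
      have h1 : adjoint t ∈ S := hclaim t ((hmemT t).1 htT) ((hmemT _).1 htaT)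
      have h2 : t ∈ S := by
        have := hclaim (adjoint t) ((hmemT _).1 htaT)
          (by rw [adjoint_adjoint]; exact (hmemT t).1 htT)
        rwa [adjoint_adjoint] at this
      exact ⟨h2, h1⟩
    · rintro ⟨h1, h2⟩
      exact ⟨hST h1, hST h2⟩
  have hTtri : IsTriangular T := by
    unfold IsTriangular
    rw [hdiag]
    exact hS.1
  have hSeqT := hS.2 T hTtri hST
  intro x
  rw [hSeqT]
  exact ⟨0, S.zero_mem, x, (zero_add _).symm⟩

end Corner

open ContinuousLinearMap in
/-- (Lemma on `c₂`.) Let `δ` be a bounded derivation on a maximal triangular algebra `S`,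
let `p ∈ lat(S)` be nontrivial, fix unit vectors `ξ₀ ∈ p⊥`, `η₁ ∈ p`, and set
`q₁ = ξ₀ ⊗ η₁ ∈ S`. Then there is `c₂ ∈ B(H)` with `‖c₂‖ ≤ 2‖δ‖`, `c₂ p = 0`,
`p c₂ p⊥ = 0`, and for every unit vector `ξ ∈ p⊥`, with `q = ξ ⊗ η₁ ∈ S` and
`p_ξ = ξ ⊗ ξ`, one has `p_ξ c₂ p⊥ = q* δ(q₁) q₁* q − q* δ(q) p⊥`. -/
theorem exists_c2 {H : Type*} [NormedAddCommGroup H] [InnerProductSpace ℂ H]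
    [CompleteSpace H] {S : Subalgebra ℂ (H →L[ℂ] H)} (hS : IsMaxTriangular S)
    (δ : S →L[ℂ] (H →L[ℂ] H)) (hδ : IsDerivation S δ)
    {p : H →L[ℂ] H} (hp : InLat S p) (hp0 : p ≠ 0) (hp1 : p ≠ 1)
    {ξ₀ : H} (hξ₀ : ‖ξ₀‖ = 1) (hpξ₀ : p ξ₀ = 0)
    {η₁ : H} (hη₁ : ‖η₁‖ = 1) (hpη₁ : p η₁ = η₁)
    (hq₁S : rankOne ξ₀ η₁ ∈ S) :
    ∃ c₂ : H →L[ℂ] H, ‖c₂‖ ≤ 2 * ‖δ‖ ∧ c₂ * p = 0 ∧ p * c₂ * (1 - p) = 0 ∧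
      ∀ ξ : H, ‖ξ‖ = 1 → p ξ = 0 → ∀ hqS : rankOne ξ η₁ ∈ S,
        rankOne ξ ξ * c₂ * (1 - p) =
          adjoint (rankOne ξ η₁) * δ ⟨rankOne ξ₀ η₁, hq₁S⟩ *
              adjoint (rankOne ξ₀ η₁) * rankOne ξ η₁ -
            adjoint (rankOne ξ η₁) * δ ⟨rankOne ξ η₁, hqS⟩ * (1 - p) := by

  have hpp : p * p = p := hp.1
  have hpa : adjoint p = p := hp.2.1
  have hcorner : ∀ x : H →L[ℂ] H, p * x * (1 - p) ∈ S := corner_mem hS hp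
  have hep : (1 - p) * p = 0 := by rw [sub_mul, one_mul, hpp, sub_self]
  have hpe : p * (1 - p) = 0 := by rw [mul_sub, mul_one, hpp, sub_self]
  have hee : (1 - p) * (1 - p) = 1 - p := by rw [mul_sub, mul_one, hep, sub_zero]
  have hea : adjoint (1 - p) = 1 - p := by
    rw [← star_eq_adjoint, star_sub, star_one, star_eq_adjoint, hpa]
  have hδnn : (0:ℝ) ≤ ‖δ‖ := ContinuousLinearMap.opNorm_nonneg δ
  have hmem : ∀ ξ : H, rankOne ((1 - p) ξ) η₁ ∈ S := by
    intro ξ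
    have key : rankOne ((1 - p) ξ) η₁ = p * rankOne ξ η₁ * (1 - p) := by
      ext ζ
      simp only [ContinuousLinearMap.mul_apply, rankOne_apply, map_smul, hpη₁]
      congr 1
      have h := adjoint_inner_left (1 - p) ζ ξ
      rwa [hea] at h
    rw [key]; exact hcorner _
  -- the operator Φ
  obtain ⟨Φ, hΦnorm, hΦapply⟩ : ∃ Φ : H →L[ℂ] H, ‖Φ‖ ≤ ‖δ‖ ∧
      ∀ ξ : H, Φ ξ = star ((δ ⟨rankOne ((1 - p) ξ) η₁, hmem ξ⟩ : H →L[ℂ] H)) η₁ := by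
    have hbd : ∀ ξ : H,
        ‖star ((δ ⟨rankOne ((1 - p) ξ) η₁, hmem ξ⟩ : H →L[ℂ] H)) η₁‖ ≤ ‖δ‖ * ‖ξ‖ := by
      intro ξ
      have h1 : ‖star ((δ ⟨rankOne ((1 - p) ξ) η₁, hmem ξ⟩ : H →L[ℂ] H)) η₁‖
          ≤ ‖(δ ⟨rankOne ((1 - p) ξ) η₁, hmem ξ⟩ : H →L[ℂ] H)‖ := by
        calc ‖star ((δ ⟨rankOne ((1 - p) ξ) η₁, hmem ξ⟩ : H →L[ℂ] H)) η₁‖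
            ≤ ‖star ((δ ⟨rankOne ((1 - p) ξ) η₁, hmem ξ⟩ : H →L[ℂ] H))‖ * ‖η₁‖ :=
              le_opNorm _ _
          _ = ‖(δ ⟨rankOne ((1 - p) ξ) η₁, hmem ξ⟩ : H →L[ℂ] H)‖ := by
              rw [hη₁, mul_one, norm_star]
      have h2 : ‖(δ ⟨rankOne ((1 - p) ξ) η₁, hmem ξ⟩ : H →L[ℂ] H)‖
          ≤ ‖δ‖ * ‖ξ‖ := by
        calc ‖(δ ⟨rankOne ((1 - p) ξ) η₁, hmem ξ⟩ : H →L[ℂ] H)‖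
            ≤ ‖δ‖ * ‖(⟨rankOne ((1 - p) ξ) η₁, hmem ξ⟩ : S)‖ := le_opNorm δ _
          _ = ‖δ‖ * ‖rankOne ((1 - p) ξ) η₁‖ := rfl
          _ ≤ ‖δ‖ * (‖(1 - p) ξ‖ * ‖η₁‖) :=
              mul_le_mul_of_nonneg_left (rankOne_norm_le _ _) hδnn
          _ = ‖δ‖ * ‖(1 - p) ξ‖ := by rw [hη₁, mul_one]
          _ ≤ ‖δ‖ * ‖ξ‖ :=
              mul_le_mul_of_nonneg_left (proj_apply_norm_le hee hea ξ) hδnn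
      exact h1.trans h2
    refine ⟨LinearMap.mkContinuous
      { toFun := fun ξ => star ((δ ⟨rankOne ((1 - p) ξ) η₁, hmem ξ⟩ : H →L[ℂ] H)) η₁
        map_add' := ?_
        map_smul' := ?_ } ‖δ‖ hbd,
      LinearMap.mkContinuous_norm_le _ hδnn _, fun ξ => rfl⟩
    · intro ξ ξ'
      have e : (⟨rankOne ((1 - p) (ξ + ξ')) η₁, hmem _⟩ : S)
          = ⟨rankOne ((1 - p) ξ) η₁, hmem _⟩ + ⟨rankOne ((1 - p) ξ') η₁, hmem _⟩ := by
        apply Subtype.ext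
        show rankOne ((1 - p) (ξ + ξ')) η₁
          = rankOne ((1 - p) ξ) η₁ + rankOne ((1 - p) ξ') η₁
        rw [map_add, rankOne_add_left]
      rw [e, map_add, star_add, ContinuousLinearMap.add_apply]
    · intro c ξ
      have e : (⟨rankOne ((1 - p) (c • ξ)) η₁, hmem _⟩ : S)
          = starRingEnd ℂ c • ⟨rankOne ((1 - p) ξ) η₁, hmem _⟩ := by
        apply Subtype.ext
        show rankOne ((1 - p) (c • ξ)) η₁ = starRingEnd ℂ c • rankOne ((1 - p) ξ) η₁
        rw [map_smul, rankOne_smul_left]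
      rw [e, map_smul, star_smul, ContinuousLinearMap.smul_apply]
      simp [Complex.star_def]
  set lam : ℂ := inner ℂ η₁ ((δ ⟨rankOne ξ₀ η₁, hq₁S⟩ : H →L[ℂ] H) ξ₀) with hlam_def
  set mid : H →L[ℂ] H := lam • (1 : H →L[ℂ] H) - adjoint Φ with hmid_def
  refine ⟨(1 - p) * mid * (1 - p), ?_, ?_, ?_, ?_⟩
  · -- norm bound
    have hlam : ‖lam‖ ≤ ‖δ‖ := by
      calc ‖lam‖ ≤ ‖η₁‖ * ‖(δ ⟨rankOne ξ₀ η₁, hq₁S⟩ : H →L[ℂ] H) ξ₀‖ :=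
            norm_inner_le_norm _ _
        _ = ‖(δ ⟨rankOne ξ₀ η₁, hq₁S⟩ : H →L[ℂ] H) ξ₀‖ := by rw [hη₁, one_mul]
        _ ≤ ‖(δ ⟨rankOne ξ₀ η₁, hq₁S⟩ : H →L[ℂ] H)‖ * ‖ξ₀‖ := le_opNorm _ _
        _ = ‖(δ ⟨rankOne ξ₀ η₁, hq₁S⟩ : H →L[ℂ] H)‖ := by rw [hξ₀, mul_one]
        _ ≤ ‖δ‖ * ‖(⟨rankOne ξ₀ η₁, hq₁S⟩ : S)‖ := le_opNorm δ _
        _ = ‖δ‖ * ‖rankOne ξ₀ η₁‖ := rfl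
        _ ≤ ‖δ‖ * (‖ξ₀‖ * ‖η₁‖) := mul_le_mul_of_nonneg_left (rankOne_norm_le _ _) hδnn
        _ = ‖δ‖ := by rw [hξ₀, hη₁, one_mul, mul_one]
    have hmid : ‖mid‖ ≤ 2 * ‖δ‖ := by
      calc ‖mid‖ ≤ ‖lam • (1 : H →L[ℂ] H)‖ + ‖adjoint Φ‖ := norm_sub_le _ _
        _ ≤ ‖lam‖ * 1 + ‖Φ‖ := by
            rw [norm_smul, LinearIsometryEquiv.norm_map]
            gcongr
            rw [ContinuousLinearMap.one_def]
            exact norm_id_le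
        _ ≤ ‖δ‖ + ‖δ‖ := by rw [mul_one]; exact add_le_add hlam hΦnorm
        _ = 2 * ‖δ‖ := by ring
    have he1 : ‖(1 : H →L[ℂ] H) - p‖ ≤ 1 := proj_norm_le hee hea
    have h1 := norm_mul_le ((1 - p) * mid) (1 - p)
    have h2 := norm_mul_le ((1 : H →L[ℂ] H) - p) mid
    nlinarith [norm_nonneg mid, norm_nonneg ((1 : H →L[ℂ] H) - p),
      norm_nonneg ((1 - p) * mid)]
  · rw [mul_assoc, hep, mul_zero]
  · have e : p * ((1 - p) * mid * (1 - p)) * (1 - p)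
        = (p * (1 - p)) * (mid * ((1 - p) * (1 - p))) := by noncomm_ring
    rw [e, hpe, zero_mul]
  · intro ξ hξu hpξ hqS
    have heξ : ((1 : H →L[ℂ] H) - p) ξ = ξ := by
      rw [ContinuousLinearMap.sub_apply, ContinuousLinearMap.one_apply, hpξ, sub_zero]
    have hqeq : (⟨rankOne (((1 : H →L[ℂ] H) - p) ξ) η₁, hmem ξ⟩ : S) = ⟨rankOne ξ η₁, hqS⟩ := by
      apply Subtype.ext
      show rankOne (((1 : H →L[ℂ] H) - p) ξ) η₁ = rankOne ξ η₁
      rw [heξ]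
    have hw : ∀ u : H, ((1 : H →L[ℂ] H) - p) (((1 : H →L[ℂ] H) - p) u)
        = ((1 : H →L[ℂ] H) - p) u := fun u => by rw [← ContinuousLinearMap.mul_apply, hee]
    have hinnerξ : ∀ v : H, (inner ℂ ξ (((1 : H →L[ℂ] H) - p) v) : ℂ) = inner ℂ ξ v := by
      intro v
      have h := adjoint_inner_left ((1 : H →L[ℂ] H) - p) v ξ
      rw [hea, heξ] at h
      exact h.symm
    have hη₁self : (inner ℂ η₁ η₁ : ℂ) = 1 := by
      rw [inner_self_eq_norm_sq_to_K, hη₁]; norm_num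
    have hΦξ : Φ ξ = star ((δ ⟨rankOne ξ η₁, hqS⟩ : H →L[ℂ] H)) η₁ := by
      rw [hΦapply ξ, hqeq]
    ext ζ
    rw [ContinuousLinearMap.sub_apply]
    have s1 : (rankOne ξ ξ * ((1 - p) * mid * (1 - p)) * (1 - p)) ζ
        = rankOne ξ ξ (((1 : H →L[ℂ] H) - p) (mid (((1 : H →L[ℂ] H) - p) ζ))) := by
      simp only [ContinuousLinearMap.mul_apply, hw]
    have s3a : ∀ w : H, (inner ℂ ξ (mid w) : ℂ)
        = lam * inner ℂ ξ w - inner ℂ η₁ ((δ ⟨rankOne ξ η₁, hqS⟩ : H →L[ℂ] H) w) := by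
      intro w
      rw [hmid_def, ContinuousLinearMap.sub_apply, ContinuousLinearMap.smul_apply,
        ContinuousLinearMap.one_apply, inner_sub_right, inner_smul_right,
        adjoint_inner_right, hΦξ, star_eq_adjoint, adjoint_inner_left]
    have hLHS : (rankOne ξ ξ * ((1 - p) * mid * (1 - p)) * (1 - p)) ζ
        = (lam * inner ℂ ξ ζ
            - inner ℂ η₁ ((δ ⟨rankOne ξ η₁, hqS⟩ : H →L[ℂ] H) (((1 : H →L[ℂ] H) - p) ζ)) : ℂ)
          • ξ := by
      rw [s1, rankOne_apply, hinnerξ, s3a, hinnerξ]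
    have hR1 : (adjoint (rankOne ξ η₁) * δ ⟨rankOne ξ₀ η₁, hq₁S⟩ *
          adjoint (rankOne ξ₀ η₁) * rankOne ξ η₁) ζ = ((lam * inner ℂ ξ ζ : ℂ)) • ξ := by
      simp only [ContinuousLinearMap.mul_apply, adjoint_rankOne, rankOne_apply, map_smul, inner_smul_right,
        hη₁self, smul_smul]
      congr 1
      ring
    have hR2 : (adjoint (rankOne ξ η₁) * δ ⟨rankOne ξ η₁, hqS⟩ * (1 - p)) ζ
        = (inner ℂ η₁ ((δ ⟨rankOne ξ η₁, hqS⟩ : H →L[ℂ] H) (((1 : H →L[ℂ] H) - p) ζ)) : ℂ)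
          • ξ := by
      simp only [ContinuousLinearMap.mul_apply, adjoint_rankOne, rankOne_apply]
    rw [hLHS, hR1, hR2, sub_smul]
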